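/- Let f : ℝⁿ → ℝ be C¹ with M-Lipschitz gradient on a suitable convex set containing the iterates, β ∈ (−1,1), γ ∈ ℝ, α ∈ (0, ᾱ] with ᾱ = min{1/M, (1−β²)/(2(β²+2|β−γ|)M)}, and λ ∈ (λ⁻, λ⁺) with λ⁻, λ⁺ as in the previous definitions. Define H_λ(x,y) = f(x) + λ‖x−y‖². Then for momentum iterates x_{k+1} = x_k + β(x_k−x_{k−1}) − α∇f(x_k + γ(x_k−x_{k−1})), with c₁ = min{λ−λ⁻, λ⁺−λ} > 0, one has H_λ(x_{k+1},x_k) ≤ H_λ(x_k,x_{k−1}) − c₁(‖x_{k+1}−x_k‖² + ‖x_k−x_{k−1}‖²). -/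

import Mathlib

open scoped RealInnerProductSpace

lemma taylor_bound {n : ℕ}
    (f : EuclideanSpace ℝ (Fin n) → ℝ) (hf : ContDiff ℝ 1 f)
    (S : Set (EuclideanSpace ℝ (Fin n))) (hS : Convex ℝ S)
    (M : ℝ) (hM : 0 ≤ M)
    (hLip : ∀ u ∈ S, ∀ v ∈ S, ‖gradient f u - gradient f v‖ ≤ M * ‖u - v‖)
    (u v : EuclideanSpace ℝ (Fin n)) (hu : u ∈ S) (hv : v ∈ S) :
    |f v - f u - ⟪gradient f u, v - u⟫| ≤ M / 2 * ‖v - u‖ ^ 2 := by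
  set w := v - u with hw
  set g : ℝ → ℝ := fun t => ⟪gradient f (u + t • w), w⟫ with hg
  have hmem : ∀ t ∈ Set.Icc (0:ℝ) 1, u + t • w ∈ S := by
    intro t ht
    have : u + t • w = (1 - t) • u + t • v := by
      rw [hw]; module
    rw [this]
    exact hS hu hv (by linarith [ht.2]) ht.1 (by ring)
  have hgrad : Continuous fun x => gradient f x := by
    have h1 : Continuous (fderiv ℝ f) := hf.continuous_fderiv one_ne_zero
    exact ((InnerProductSpace.toDual ℝ _).symm.continuous).comp h1
  have hgc : Continuous g := by
    apply Continuous.inner (hgrad.comp (by continuity)) continuous_const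
  have hderiv : ∀ t ∈ Set.uIcc (0:ℝ) 1, HasDerivAt (fun t : ℝ => f (u + t • w)) (g t) t := by
    intro t _
    have hline : HasDerivAt (fun t : ℝ => u + t • w) w t := by
      simpa using ((hasDerivAt_id t).smul_const w).const_add u
    have hfd : HasFDerivAt f (InnerProductSpace.toDual ℝ _ (gradient f (u + t • w)))
        (u + t • w) := (hf.differentiable one_ne_zero _).hasGradientAt.hasFDerivAt
    have := hfd.comp_hasDerivAt t hline
    simp [hg, InnerProductSpace.toDual_apply_apply] at this ⊢; exact this
  have hint : IntervalIntegrable g MeasureTheory.volume 0 1 :=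
    hgc.intervalIntegrable 0 1
  have hftc : ∫ t in (0:ℝ)..1, g t = f (u + (1:ℝ) • w) - f (u + (0:ℝ) • w) :=
    intervalIntegral.integral_eq_sub_of_hasDerivAt hderiv hint
  have hfv : f (u + (1:ℝ) • w) = f v := by rw [hw]; norm_num
  have hfu : f (u + (0:ℝ) • w) = f u := by norm_num
  have hkey : f v - f u - ⟪gradient f u, w⟫ = ∫ t in (0:ℝ)..1, (g t - g 0) := by
    rw [intervalIntegral.integral_sub hint (intervalIntegrable_const)]
    rw [hftc, hfv, hfu]
    simp [hg]
  have hbound : ∀ t ∈ Set.Icc (0:ℝ) 1, |g t - g 0| ≤ M * ‖w‖ ^ 2 * t := by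
    intro t ht
    have h0 : u + (0:ℝ) • w = u := by norm_num
    have : g t - g 0 = ⟪gradient f (u + t • w) - gradient f u, w⟫ := by
      simp [hg, h0, inner_sub_left]
    rw [this]
    calc |⟪gradient f (u + t • w) - gradient f u, w⟫|
        ≤ ‖gradient f (u + t • w) - gradient f u‖ * ‖w‖ := abs_real_inner_le_norm _ _
      _ ≤ (M * ‖(u + t • w) - u‖) * ‖w‖ := by
          gcongr
          exact hLip _ (hmem t ht) _ hu
      _ = M * ‖w‖ ^ 2 * t := by
          have : (u + t • w) - u = t • w := by abel
          rw [this, norm_smul, Real.norm_eq_abs, abs_of_nonneg ht.1]; ring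
  calc |f v - f u - ⟪gradient f u, w⟫|
      = |∫ t in (0:ℝ)..1, (g t - g 0)| := by rw [hkey]
    _ ≤ ∫ t in (0:ℝ)..1, |g t - g 0| :=
        intervalIntegral.abs_integral_le_integral_abs zero_le_one
    _ ≤ ∫ t in (0:ℝ)..1, M * ‖w‖ ^ 2 * t := by
        apply intervalIntegral.integral_mono_on zero_le_one
        · exact (hint.sub intervalIntegrable_const).abs
        · exact ((continuous_const.mul continuous_id).intervalIntegrable 0 1 : IntervalIntegrable (fun t : ℝ => M * ‖w‖ ^ 2 * t) MeasureTheory.volume 0 1)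
        · intro t ht; exact hbound t ht
    _ = M / 2 * ‖w‖ ^ 2 := by
        rw [intervalIntegral.integral_const_mul, integral_id]; ring

lemma momentum_aux1 (M r a b : ℝ) (hr : 0 ≤ r) (hM : 0 ≤ M) :
    M * r * a * b ≤ r * M / 2 * (a ^ 2 + b ^ 2) := by
  nlinarith [mul_nonneg (mul_nonneg hr hM) (sq_nonneg (a - b))]

lemma momentum_aux2 (c β a b p : ℝ) (hc : 0 ≤ c) (hp : |p| ≤ a * b) :
    β * c * p ≤ c / 2 * (β ^ 2 * a ^ 2 + b ^ 2) := by
  have h1 : β * p ≤ |β| * (a * b) := by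
    calc β * p ≤ |β * p| := le_abs_self _
      _ = |β| * |p| := abs_mul _ _
      _ ≤ |β| * (a * b) := mul_le_mul_of_nonneg_left hp (abs_nonneg _)
  have h2 : β * p ≤ (β ^ 2 * a ^ 2 + b ^ 2) / 2 := by
    nlinarith [sq_nonneg (|β| * a - b), sq_abs β]
  nlinarith [mul_le_mul_of_nonneg_left h2 hc]

/-- Lyapunov decrease along one step of the momentum method (Lemma 3.1). -/
theorem momentum_lyapunov_decrease {n : ℕ}
    (f : EuclideanSpace ℝ (Fin n) → ℝ) (hf : ContDiff ℝ 1 f)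
    (S : Set (EuclideanSpace ℝ (Fin n))) (hS : Convex ℝ S)
    (M α β γ lam : ℝ) (hM : 0 < M) (hα0 : 0 < α)
    (hβ : β ∈ Set.Ioo (-1 : ℝ) 1)
    (hα1 : α ≤ 1 / M)
    (hα2 : β ^ 2 + 2 * |β - γ| ≠ 0 →
      α ≤ (1 - β ^ 2) / (2 * (β ^ 2 + 2 * |β - γ|) * M))
    (hlam : lam ∈ Set.Ioo ((1 / (2 * α) + M / 2) * β ^ 2 + |β - γ| * M / 2)
                          (1 / (2 * α) - |β - γ| * M / 2))
    (hLip : ∀ u ∈ S, ∀ v ∈ S, ‖gradient f u - gradient f v‖ ≤ M * ‖u - v‖)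
    (xkm1 xk xkp1 : EuclideanSpace ℝ (Fin n))
    (hmem1 : xkm1 ∈ S) (hmem2 : xk ∈ S) (hmem3 : xkp1 ∈ S)
    (hmemβ : xk + β • (xk - xkm1) ∈ S) (hmemγ : xk + γ • (xk - xkm1) ∈ S)
    (hupdate : xkp1 = xk + β • (xk - xkm1) - α • gradient f (xk + γ • (xk - xkm1))) :
    f xkp1 + lam * ‖xkp1 - xk‖ ^ 2 ≤
      (f xk + lam * ‖xk - xkm1‖ ^ 2)
        - min (lam - ((1 / (2 * α) + M / 2) * β ^ 2 + |β - γ| * M / 2))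
              ((1 / (2 * α) - |β - γ| * M / 2) - lam)
          * (‖xkp1 - xk‖ ^ 2 + ‖xk - xkm1‖ ^ 2) := by
  have hαne : α ≠ 0 := ne_of_gt hα0
  set d := xk - xkm1 with hd
  set δ := xkp1 - xk with hδ
  set yk := xk + γ • d with hyk
  set zk := xk + β • d with hzk
  set g := gradient f yk with hgdef
  set gz := gradient f zk with hgzdef
  set a := ‖d‖ with ha
  set b := ‖δ‖ with hb
  set r := |β - γ| with hr0
  set p := ⟪d, δ⟫ with hp0
  have ha0 : (0:ℝ) ≤ a := norm_nonneg _
  have hb0 : (0:ℝ) ≤ b := norm_nonneg _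
  have hr : (0:ℝ) ≤ r := abs_nonneg _
  -- vector identities
  have e1 : xkp1 - zk = -(α • g) := by rw [hupdate, hzk]; abel
  have e2 : xk - zk = -(β • d) := by rw [hzk]; abel
  have e3 : β • d - δ = α • g := by rw [hδ, hupdate, hzk]; abel
  have e4 : zk - yk = (β - γ) • d := by rw [hzk, hyk]; module
  -- Taylor bounds
  have h1 := taylor_bound f hf S hS M hM.le hLip zk xkp1 hmemβ hmem3
  have h2 := taylor_bound f hf S hS M hM.le hLip zk xk hmemβ hmem2
  rw [abs_le] at h1 h2
  -- norms and inner products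
  have n1 : ‖xkp1 - zk‖ ^ 2 = α ^ 2 * ‖g‖ ^ 2 := by
    rw [e1, norm_neg, norm_smul, Real.norm_eq_abs, mul_pow, sq_abs]
  have n2 : ‖xk - zk‖ ^ 2 = β ^ 2 * a ^ 2 := by
    rw [e2, norm_neg, norm_smul, Real.norm_eq_abs, mul_pow, sq_abs, ha]
  have i1 : ⟪gz, xkp1 - zk⟫ = -(α * ⟪gz, g⟫) := by
    rw [e1, inner_neg_right, real_inner_smul_right]
  have i2 : ⟪gz, xk - zk⟫ = -(β * ⟪gz, d⟫) := by
    rw [e2, inner_neg_right, real_inner_smul_right]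
  -- combined descent inequality
  have hA : f xkp1 ≤ f xk + ⟪gz, δ⟫ + M / 2 * (α ^ 2 * ‖g‖ ^ 2 + β ^ 2 * a ^ 2) := by
    have hiδ : ⟪gz, δ⟫ = β * ⟪gz, d⟫ - α * ⟪gz, g⟫ := by
      have : δ = β • d - α • g := by rw [← e3]; abel
      rw [this, inner_sub_right, real_inner_smul_right, real_inner_smul_right]
    have h1' := h1.2; have h2' := h2.1
    rw [i1, n1] at h1'
    rw [i2, n2] at h2'
    -- h1' : f xkp1 - f zk - (-(α*⟪gz,g⟫)) ≤ M/2 * (α²‖g‖²)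
    -- h2' : -(M/2 * (β² a²)) ≤ f xk - f zk - (-(β*⟪gz,d⟫))
    rw [hiδ]; linarith
  -- gradient difference bound
  have hB : ⟪gz, δ⟫ ≤ ⟪g, δ⟫ + M * r * a * b := by
    have hsplit : ⟪gz, δ⟫ = ⟪g, δ⟫ + ⟪gz - g, δ⟫ := by
      rw [inner_sub_left]; ring
    have hcs : ⟪gz - g, δ⟫ ≤ ‖gz - g‖ * b := real_inner_le_norm _ _
    have hlip' : ‖gz - g‖ ≤ M * (r * a) := by
      have := hLip zk hmemβ yk hmemγ
      rwa [e4, norm_smul, Real.norm_eq_abs, ← hr0, ← ha] at this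
    have hb' : ‖gz - g‖ * b ≤ M * (r * a) * b :=
      mul_le_mul_of_nonneg_right hlip' hb0
    rw [hsplit]; linarith [hcs, hb']
  -- express ⟪g, δ⟫
  have hC : ⟪g, δ⟫ = (β * p - b ^ 2) / α := by
    rw [eq_div_iff hαne]
    have : α * ⟪g, δ⟫ = ⟪α • g, δ⟫ := (real_inner_smul_left _ _ _).symm
    rw [mul_comm, this, ← e3, inner_sub_left, real_inner_smul_left,
      real_inner_self_eq_norm_sq]
  -- express α²‖g‖²
  have hD : α ^ 2 * ‖g‖ ^ 2 = β ^ 2 * a ^ 2 - 2 * β * p + b ^ 2 := by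
    have : α ^ 2 * ‖g‖ ^ 2 = ‖α • g‖ ^ 2 := by
      rw [norm_smul, Real.norm_eq_abs, mul_pow, sq_abs]
    rw [this, ← e3, norm_sub_sq_real, norm_smul, Real.norm_eq_abs, mul_pow, sq_abs,
      real_inner_smul_left, ← ha, ← hb, ← hp0]
    ring
  -- Cauchy-Schwarz and elementary bounds
  have hcs : |p| ≤ a * b := abs_real_inner_le_norm _ _
  have hαM : M ≤ 1 / α := by
    rw [le_div_iff₀ hα0]
    calc M * α ≤ M * (1 / M) := by
          exact mul_le_mul_of_nonneg_left hα1 hM.le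
      _ = 1 := by field_simp
  have k1 : M * r * a * b ≤ r * M / 2 * (a ^ 2 + b ^ 2) :=
    momentum_aux1 M r a b hr hM.le
  have k2 : β * (1 / α - M) * p ≤ (1 / α - M) / 2 * (β ^ 2 * a ^ 2 + b ^ 2) :=
    momentum_aux2 (1 / α - M) β a b p (by linarith) hcs
  -- the key per-step bound
  have hS' : f xkp1 ≤ f xk
      + ((1 / (2 * α) + M / 2) * β ^ 2 + r * M / 2) * a ^ 2
      - (1 / (2 * α) - r * M / 2) * b ^ 2 := by
    have hAB : f xkp1 ≤ f xk + (β * p - b ^ 2) / α + M * r * a * b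
        + M / 2 * ((β ^ 2 * a ^ 2 - 2 * β * p + b ^ 2) + β ^ 2 * a ^ 2) := by
      rw [hD] at hA
      linarith [hA, hB, hC.le, hC.ge]
    have hexp : (β * p - b ^ 2) / α = β * (1 / α) * p - (1 / α) * b ^ 2 := by
      field_simp
    rw [hexp] at hAB
    have goalexp : (1 / (2 * α)) = (1 / α) / 2 := by field_simp
    rw [goalexp]
    linarith [k1, k2, hAB]
  -- conclude
  obtain ⟨hl1, hl2⟩ := hlam
  set c1 := min (lam - ((1 / (2 * α) + M / 2) * β ^ 2 + r * M / 2))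
                ((1 / (2 * α) - r * M / 2) - lam) with hc1
  have hc1a : c1 ≤ lam - ((1 / (2 * α) + M / 2) * β ^ 2 + r * M / 2) := min_le_left _ _
  have hc1b : c1 ≤ (1 / (2 * α) - r * M / 2) - lam := min_le_right _ _
  have g1 : 0 ≤ (lam - ((1 / (2 * α) + M / 2) * β ^ 2 + r * M / 2) - c1) * a ^ 2 :=
    mul_nonneg (by linarith) (sq_nonneg a)
  have g2 : 0 ≤ ((1 / (2 * α) - r * M / 2) - lam - c1) * b ^ 2 :=
    mul_nonneg (by linarith) (sq_nonneg b)
  linarith [hS', g1, g2]
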